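/- Negative feedback combination: let J = [[J_1, −k J_21^T],[J_21, J_2]] with k > 0, and suppose W_1 J_1 W_1^T and W_2 J_2 W_2^T have uniformly negative definite symmetric parts (with bound −β < 0). Then with Θ = diag(I, √k I), the symmetric part of Θ (V J V^T) Θ^{-1}, where V = diag(W_1, W_2), equals blockdiag of the symmetric parts of W_1 J_1 W_1^T and W_2 J_2 W_2^T (the off-diagonal blocks cancel), and is hence uniformly negative definite with the same bound. -/

import Mathlib

open Matrix

/-- Negative feedback combination. For J = [[J₁, −k J₂₁ᵀ],[J₂₁, J₂]] (k > 0,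
possibly state/time dependent through an index ι), V = diag(W₁, W₂), Θ = diag(I, √k I),
the symmetric part of Θ (V J Vᵀ) Θ⁻¹ equals the block diagonal of the symmetric parts of
W₁ J₁ W₁ᵀ and W₂ J₂ W₂ᵀ (the off-diagonal blocks cancel); hence if these have uniformly
negative definite symmetric parts with bound −β, so does Θ (V J Vᵀ) Θ⁻¹, with the same bound. -/

private lemma quadsym {n : Type*} [Fintype n] (M : Matrix n n ℝ) (v : n → ℝ) :
    v ⬝ᵥ Mᵀ.mulVec v = v ⬝ᵥ M.mulVec v := by
  rw [dotProduct_mulVec, vecMul_transpose, dotProduct_comm]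

private lemma symquad {n : Type*} [Fintype n] (M : Matrix n n ℝ) (v : n → ℝ) :
    v ⬝ᵥ (((1 : ℝ) / 2) • (M + Mᵀ)).mulVec v = v ⬝ᵥ M.mulVec v := by
  simp [Matrix.smul_mulVec, Matrix.add_mulVec, dotProduct_add, quadsym]
  ring

theorem stmt_14 (ι : Type*) (n₁ n₂ m₁ m₂ : ℕ)
    (J₁ : ι → Matrix (Fin n₁) (Fin n₁) ℝ) (J₂ : ι → Matrix (Fin n₂) (Fin n₂) ℝ)
    (J₂₁ : ι → Matrix (Fin n₂) (Fin n₁) ℝ)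
    (k : ℝ) (hk : 0 < k)
    (W₁ : Matrix (Fin m₁) (Fin n₁) ℝ) (W₂ : Matrix (Fin m₂) (Fin n₂) ℝ)
    (hW₁ : W₁ * W₁ᵀ = 1) (hW₂ : W₂ * W₂ᵀ = 1)
    (J : ι → Matrix (Fin n₁ ⊕ Fin n₂) (Fin n₁ ⊕ Fin n₂) ℝ)
    (hJ : ∀ i, J i = Matrix.fromBlocks (J₁ i) (-(k • (J₂₁ i)ᵀ)) (J₂₁ i) (J₂ i))
    (V : Matrix (Fin m₁ ⊕ Fin m₂) (Fin n₁ ⊕ Fin n₂) ℝ)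
    (hV : V = Matrix.fromBlocks W₁ 0 0 W₂)
    (Θ Θinv : Matrix (Fin m₁ ⊕ Fin m₂) (Fin m₁ ⊕ Fin m₂) ℝ)
    (hΘ : Θ = Matrix.fromBlocks 1 0 0 (Real.sqrt k • 1))
    (hΘinv : Θinv = Matrix.fromBlocks 1 0 0 ((Real.sqrt k)⁻¹ • 1))
    (β : ℝ) (hβ : 0 < β)
    (h₁ : ∀ i (y : Fin m₁ → ℝ), y ⬝ᵥ (W₁ * J₁ i * W₁ᵀ).mulVec y ≤ -β * (y ⬝ᵥ y))
    (h₂ : ∀ i (y : Fin m₂ → ℝ), y ⬝ᵥ (W₂ * J₂ i * W₂ᵀ).mulVec y ≤ -β * (y ⬝ᵥ y)) :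
    (∀ i, ((1 : ℝ) / 2) •
        (Θ * (V * J i * Vᵀ) * Θinv + (Θ * (V * J i * Vᵀ) * Θinv)ᵀ) =
      Matrix.fromBlocks
        (((1 : ℝ) / 2) • (W₁ * J₁ i * W₁ᵀ + (W₁ * J₁ i * W₁ᵀ)ᵀ)) 0 0
        (((1 : ℝ) / 2) • (W₂ * J₂ i * W₂ᵀ + (W₂ * J₂ i * W₂ᵀ)ᵀ))) ∧
    (∀ i (y : Fin m₁ ⊕ Fin m₂ → ℝ),
      y ⬝ᵥ (Θ * (V * J i * Vᵀ) * Θinv).mulVec y ≤ -β * (y ⬝ᵥ y)) := by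
  have hsk : Real.sqrt k > 0 := Real.sqrt_pos.mpr hk
  have hkk : (Real.sqrt k)⁻¹ * k = Real.sqrt k := by
    rw [← Real.sqrt_mul_self hk.le]
    field_simp
    rw [Real.sq_sqrt (Real.sqrt_nonneg _)]
  have key : ∀ i, Θ * (V * J i * Vᵀ) * Θinv =
      Matrix.fromBlocks (W₁ * J₁ i * W₁ᵀ)
        (-(Real.sqrt k • (W₁ * (J₂₁ i)ᵀ * W₂ᵀ)))
        (Real.sqrt k • (W₂ * J₂₁ i * W₁ᵀ)) (W₂ * J₂ i * W₂ᵀ) := by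
    intro i
    rw [hJ, hV, hΘ, hΘinv]
    simp only [fromBlocks_transpose, transpose_zero, fromBlocks_multiply,
      Matrix.mul_smul, Matrix.smul_mul, Matrix.mul_neg, Matrix.neg_mul,
      Matrix.mul_zero, Matrix.zero_mul, Matrix.mul_one, Matrix.one_mul,
      add_zero, zero_add, smul_zero, neg_zero, smul_neg, smul_smul, hkk,
      Matrix.mul_assoc]
    rw [inv_mul_cancel₀ hsk.ne', one_smul]
  have key2 : ∀ i, ((1 : ℝ) / 2) •
        (Θ * (V * J i * Vᵀ) * Θinv + (Θ * (V * J i * Vᵀ) * Θinv)ᵀ) =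
      Matrix.fromBlocks
        (((1 : ℝ) / 2) • (W₁ * J₁ i * W₁ᵀ + (W₁ * J₁ i * W₁ᵀ)ᵀ)) 0 0
        (((1 : ℝ) / 2) • (W₂ * J₂ i * W₂ᵀ + (W₂ * J₂ i * W₂ᵀ)ᵀ)) := by
    intro i
    rw [key]
    rw [fromBlocks_transpose]
    have hB : -(Real.sqrt k • (W₁ * (J₂₁ i)ᵀ * W₂ᵀ)) + (Real.sqrt k • (W₂ * J₂₁ i * W₁ᵀ))ᵀ
        = 0 := by
      rw [transpose_smul, Matrix.transpose_mul, Matrix.transpose_mul,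
        Matrix.transpose_transpose, ← Matrix.mul_assoc, neg_add_cancel]
    have hC : Real.sqrt k • (W₂ * J₂₁ i * W₁ᵀ) + (-(Real.sqrt k • (W₁ * (J₂₁ i)ᵀ * W₂ᵀ)))ᵀ
        = 0 := by
      simp [Matrix.transpose_mul, Matrix.mul_assoc]
    rw [fromBlocks_add, fromBlocks_smul, hB, hC, smul_zero, smul_zero]
  refine ⟨key2, fun i y => ?_⟩
  have hq : y ⬝ᵥ (Θ * (V * J i * Vᵀ) * Θinv).mulVec y =
      y ⬝ᵥ (((1 : ℝ) / 2) •
        (Θ * (V * J i * Vᵀ) * Θinv + (Θ * (V * J i * Vᵀ) * Θinv)ᵀ)).mulVec y := by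
    exact (symquad _ y).symm
  rw [hq, key2 i]
  set S₁ := ((1 : ℝ) / 2) • (W₁ * J₁ i * W₁ᵀ + (W₁ * J₁ i * W₁ᵀ)ᵀ)
  set S₂ := ((1 : ℝ) / 2) • (W₂ * J₂ i * W₂ᵀ + (W₂ * J₂ i * W₂ᵀ)ᵀ)
  have hy : y = Sum.elim (y ∘ Sum.inl) (y ∘ Sum.inr) := (Sum.elim_comp_inl_inr y).symm
  set y₁ := y ∘ Sum.inl
  set y₂ := y ∘ Sum.inr
  have hq1 : y₁ ⬝ᵥ S₁.mulVec y₁ = y₁ ⬝ᵥ (W₁ * J₁ i * W₁ᵀ).mulVec y₁ := symquad _ y₁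
  have hq2 : y₂ ⬝ᵥ S₂.mulVec y₂ = y₂ ⬝ᵥ (W₂ * J₂ i * W₂ᵀ).mulVec y₂ := symquad _ y₂
  rw [hy, fromBlocks_mulVec, sumElim_dotProduct_sumElim, sumElim_dotProduct_sumElim]
  simp only [zero_mulVec, add_zero, zero_add]
  have b1 := h₁ i y₁
  have b2 := h₂ i y₂
  calc y₁ ⬝ᵥ S₁.mulVec y₁ + y₂ ⬝ᵥ S₂.mulVec y₂
      = y₁ ⬝ᵥ (W₁ * J₁ i * W₁ᵀ).mulVec y₁ + y₂ ⬝ᵥ (W₂ * J₂ i * W₂ᵀ).mulVec y₂ := by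
        rw [hq1, hq2]
    _ ≤ -β * (y₁ ⬝ᵥ y₁) + -β * (y₂ ⬝ᵥ y₂) := add_le_add b1 b2
    _ = -β * (y₁ ⬝ᵥ y₁ + y₂ ⬝ᵥ y₂) := by ring
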